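/- For every natural number a ≥ 1, there is no nontrivial binary cyclic LCD code of length 2^a; equivalently, if g(x) = (x−1)^i with 1 ≤ i ≤ 2^a − 1 generates an ideal C in F₂[x]/(x^{2^a} − 1), then C ∩ C^⊥ ≠ {0}. -/
import Mathlib


open Polynomial

/-- The cyclic code of length `2 ^ a` generated by `(X - 1) ^ i`, as an ideal of
`F₂[x]/(x^{2^a} - 1)`. -/
noncomputable def cyclicCodeIdeal (a i : ℕ) :
    Ideal ((ZMod 2)[X] ⧸ Ideal.span {(X : (ZMod 2)[X]) ^ 2 ^ a - 1}) :=
  Ideal.span {Ideal.Quotient.mk (Ideal.span {(X : (ZMod 2)[X]) ^ 2 ^ a - 1})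
    ((X - 1) ^ i)}

/-- The cyclic code as a set of coefficient vectors in `F₂^{2^a}`. -/
noncomputable def cyclicCodeSet (a i : ℕ) : Set (Fin (2 ^ a) → ZMod 2) :=
  {v | Ideal.Quotient.mk (Ideal.span {(X : (ZMod 2)[X]) ^ 2 ^ a - 1})
    (∑ j : Fin (2 ^ a), C (v j) * X ^ (j : ℕ)) ∈ cyclicCodeIdeal a i}

theorem no_nontrivial_lcd_cyclic_code_of_length_two_pow (a : ℕ) (ha : 1 ≤ a)
    (i : ℕ) (hi1 : 1 ≤ i) (hi2 : i ≤ 2 ^ a - 1) :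
    ∃ v : Fin (2 ^ a) → ZMod 2, v ≠ 0 ∧ v ∈ cyclicCodeSet a i ∧
      ∀ w ∈ cyclicCodeSet a i, ∑ j : Fin (2 ^ a), v j * w j = 0 := by
  have hnpos : 0 < 2 ^ a := pow_pos (by norm_num) a
  have hn : 2 ^ a - 1 + 1 = 2 ^ a := Nat.succ_pred_eq_of_pos hnpos
  have key : ((X:(ZMod 2)[X]) - 1) ^ (2 ^ a) = X ^ (2 ^ a) - 1 := by
    rw [CharTwo.sub_eq_add, CharTwo.sub_eq_add, add_pow_char_pow, one_pow]
  have hgeom : ∑ j ∈ Finset.range (2 ^ a), (X : (ZMod 2)[X]) ^ j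
      = (X - 1) ^ (2 ^ a - 1) := by
    have hne : (X : (ZMod 2)[X]) - 1 ≠ 0 := by
      have := Polynomial.X_sub_C_ne_zero (R := ZMod 2) 1
      simpa using this
    apply mul_right_cancel₀ hne
    rw [← pow_succ, hn, key, geom_sum_mul]
  refine ⟨fun _ => 1, ?_, ?_, ?_⟩
  · intro h
    have := congrFun h ⟨0, hnpos⟩
    simp at this
  · show Ideal.Quotient.mk _ _ ∈ Ideal.span _
    rw [Ideal.mem_span_singleton']
    refine ⟨Ideal.Quotient.mk _ ((X - 1) ^ (2 ^ a - 1 - i)), ?_⟩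
    rw [← map_mul]
    congr 1
    have : ∑ j : Fin (2 ^ a), C ((1 : ZMod 2)) * X ^ (j : ℕ)
        = ∑ j ∈ Finset.range (2 ^ a), (X : (ZMod 2)[X]) ^ j := by
      rw [Finset.sum_range fun j => (X : (ZMod 2)[X]) ^ j]
      simp
    rw [this, hgeom, ← pow_add]
    congr 1
    omega
  · intro w hw
    obtain ⟨c, hc⟩ := Ideal.mem_span_singleton'.mp hw
    obtain ⟨r, rfl⟩ := Ideal.Quotient.mk_surjective c
    rw [← map_mul, Ideal.Quotient.eq] at hc
    obtain ⟨s, hs⟩ := Ideal.mem_span_singleton'.mp hc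
    have heval : eval 1 (∑ j : Fin (2 ^ a), C (w j) * X ^ (j : ℕ)) = 0 := by
      have : (∑ j : Fin (2 ^ a), C (w j) * X ^ (j : ℕ))
          = r * (X - 1) ^ i - s * (X ^ 2 ^ a - 1) := by rw [hs]; ring
      rw [this]
      simp only [eval_sub, eval_mul, eval_pow, eval_X, eval_one]
      rw [one_pow, sub_self, zero_pow (show i ≠ 0 by omega), mul_zero, mul_zero, sub_zero]
    rw [eval_finset_sum] at heval
    simp only [eval_mul, eval_C, eval_pow, eval_X, one_pow, mul_one] at heval
    simpa using heval
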